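/- Every Π⁰₂ subspace of a quasi-Polish space is quasi-Polish. -/

import Mathlib

open TopologicalSpace Set Topology

/-- A Π⁰₂ set: a countable intersection of sets of the form (complement of open) ∪ open. -/
def IsPi02 {X : Type*} [TopologicalSpace X] (s : Set X) : Prop :=
  ∃ U V : ℕ → Set X, (∀ n, IsOpen (U n)) ∧ (∀ n, IsOpen (V n)) ∧
    s = ⋂ n, ((U n)ᶜ ∪ V n)

/-- A quasi-Polish space: homeomorphic to a Π⁰₂ subspace of 𝕊^ℕ,
where 𝕊 is the Sierpiński space (`Prop` with its topology in Mathlib). -/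
def QuasiPolish (X : Type*) [TopologicalSpace X] : Prop :=
  ∃ s : Set (ℕ → Prop), IsPi02 s ∧ Nonempty (X ≃ₜ s)

lemma isPi02_inter {X : Type*} [TopologicalSpace X] {s t : Set X}
    (hs : IsPi02 s) (ht : IsPi02 t) : IsPi02 (s ∩ t) := by
  obtain ⟨U1, V1, hU1, hV1, rfl⟩ := hs
  obtain ⟨U2, V2, hU2, hV2, rfl⟩ := ht
  refine ⟨fun n => if n % 2 = 0 then U1 (n / 2) else U2 (n / 2),
    fun n => if n % 2 = 0 then V1 (n / 2) else V2 (n / 2), ?_, ?_, ?_⟩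
  · intro n; dsimp only; split_ifs <;> [exact hU1 _; exact hU2 _]
  · intro n; dsimp only; split_ifs <;> [exact hV1 _; exact hV2 _]
  · ext x
    simp only [mem_inter_iff, mem_iInter, mem_union, mem_compl_iff]
    constructor
    · rintro ⟨h1, h2⟩ n
      split_ifs with h
      · exact h1 _
      · exact h2 _
    · intro h
      constructor
      · intro k
        have := h (2 * k)
        have h2 : 2 * k % 2 = 0 := by omega
        have h3 : 2 * k / 2 = k := by omega
        rw [if_pos h2, if_pos h2, h3] at this
        exact this
      · intro k
        have := h (2 * k + 1)
        have h2 : ¬ (2 * k + 1) % 2 = 0 := by omega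
        have h3 : (2 * k + 1) / 2 = k := by omega
        rw [if_neg h2, if_neg h2, h3] at this
        exact this

theorem quasiPolish_of_isPi02_subset {X : Type*} [TopologicalSpace X]
    (hX : QuasiPolish X) (Y : Set X) (hY : IsPi02 Y) : QuasiPolish Y := by
  obtain ⟨s, hs, ⟨e⟩⟩ := hX
  obtain ⟨U, V, hU, hV, hYeq⟩ := hY
  have hWU : ∀ n, ∃ W : Set (ℕ → Prop), IsOpen W ∧
      (Subtype.val ⁻¹' W : Set s) = e '' (U n) := by
    intro n
    have : IsOpen (e '' (U n)) := e.isOpen_image.2 (hU n)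
    rwa [isOpen_induced_iff] at this
  have hWV : ∀ n, ∃ W : Set (ℕ → Prop), IsOpen W ∧
      (Subtype.val ⁻¹' W : Set s) = e '' (V n) := by
    intro n
    have : IsOpen (e '' (V n)) := e.isOpen_image.2 (hV n)
    rwa [isOpen_induced_iff] at this
  choose WU hWUo hWUe using hWU
  choose WV hWVo hWVe using hWV
  have hmemU : ∀ n (x : X), (↑(e x) : ℕ → Prop) ∈ WU n ↔ x ∈ U n := by
    intro n x
    have : e x ∈ (Subtype.val ⁻¹' WU n : Set s) ↔ e x ∈ e '' (U n) := by rw [hWUe n]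
    simpa [e.injective.mem_set_image] using this
  have hmemV : ∀ n (x : X), (↑(e x) : ℕ → Prop) ∈ WV n ↔ x ∈ V n := by
    intro n x
    have : e x ∈ (Subtype.val ⁻¹' WV n : Set s) ↔ e x ∈ e '' (V n) := by rw [hWVe n]
    simpa [e.injective.mem_set_image] using this
  refine ⟨s ∩ ⋂ n, ((WU n)ᶜ ∪ WV n),
    isPi02_inter hs ⟨WU, WV, hWUo, hWVo, rfl⟩, ⟨?_⟩⟩
  have key : Subtype.val '' (e '' Y : Set s) = s ∩ ⋂ n, ((WU n)ᶜ ∪ WV n) := by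
    ext p
    simp only [mem_image, mem_inter_iff, mem_iInter, mem_union, mem_compl_iff]
    constructor
    · rintro ⟨a, ⟨x, hx, rfl⟩, rfl⟩
      refine ⟨(e x).2, fun n => ?_⟩
      rw [hYeq] at hx
      have := mem_iInter.1 hx n
      rcases this with h | h
      · exact Or.inl fun hc => h ((hmemU n x).1 hc)
      · exact Or.inr ((hmemV n x).2 h)
    · rintro ⟨hps, hrest⟩
      refine ⟨e (e.symm ⟨p, hps⟩), ⟨e.symm ⟨p, hps⟩, ?_, rfl⟩, by simp⟩
      rw [hYeq]
      refine mem_iInter.2 fun n => ?_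
      have hval : (↑(e (e.symm ⟨p, hps⟩)) : ℕ → Prop) = p := by simp
      rcases hrest n with h | h
      · exact Or.inl fun hc => h (by rw [← hval]; exact (hmemU n _).2 hc)
      · exact Or.inr ((hmemV n _).1 (by rw [hval]; exact h))
  have emb : IsEmbedding (fun a : (e '' Y : Set s) => ((a : s) : ℕ → Prop)) :=
    IsEmbedding.subtypeVal.comp IsEmbedding.subtypeVal
  have hrange : range (fun a : (e '' Y : Set s) => ((a : s) : ℕ → Prop)) =
      Subtype.val '' (e '' Y : Set s) := by
    rw [show (fun a : (e '' Y : Set s) => ((a : s) : ℕ → Prop)) =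
      (Subtype.val ∘ Subtype.val) from rfl, range_comp, Subtype.range_coe]
  exact (e.image Y).trans ((IsEmbedding.toHomeomorph emb).trans
    (Homeomorph.setCongr (hrange.trans key)))
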